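/- Consider the convex program P: minimize cᵀx over x ∈ ℝⁿ subject to x ∈ 𝒳_i for every i ∈ [m], where c ∈ ℝⁿ, each 𝒳_i ⊆ ℝⁿ is closed and convex, the feasible set ⋂_{i∈[m]} 𝒳_i is nonempty, and the infimum of cᵀx over the feasible set is finite and attained. Then the number of support constraints of P is at most n. -/

import Mathlib

/-- For the convex program `min cᵀx s.t. x ∈ 𝒳ᵢ, i ∈ [m]` with closed convex
constraint sets, nonempty feasible set and attained finite optimum (attained at `x0`), the number
of support constraints (constraints whose removal strictly improves the optimal value, i.e. there
is a point feasible for all other constraints with strictly smaller objective) is at most `n`. -/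
theorem stmt_0 (n m : ℕ) (c : Fin n → ℝ) (X : Fin m → Set (Fin n → ℝ))
    (hclosed : ∀ i, IsClosed (X i)) (hconv : ∀ i, Convex ℝ (X i))
    (x0 : Fin n → ℝ) (hx0 : x0 ∈ ⋂ i, X i)
    (hopt : ∀ x ∈ ⋂ i, X i, (∑ j, c j * x0 j) ≤ ∑ j, c j * x j) :
    {k : Fin m | ∃ x : Fin n → ℝ, (∀ i, i ≠ k → x ∈ X i) ∧
      (∑ j, c j * x j) < ∑ j, c j * x0 j}.ncard ≤ n := by
  classical
  set S := {k : Fin m | ∃ x : Fin n → ℝ, (∀ i, i ≠ k → x ∈ X i) ∧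
      (∑ j, c j * x j) < ∑ j, c j * x0 j} with hS
  by_contra hcard
  push_neg at hcard
  -- a linear functional for the objective
  set L : (Fin n → ℝ) →ₗ[ℝ] ℝ :=
    { toFun := fun x => ∑ j, c j * x j
      map_add' := by
        intro a b
        simp [mul_add, Finset.sum_add_distrib]
      map_smul' := by
        intro r a
        simp [Finset.mul_sum]
        ring_nf
        simp [mul_comm, mul_left_comm] } with hL
  have hLdef : ∀ x : Fin n → ℝ, L x = ∑ j, c j * x j := fun x => rfl
  set v : ℝ := L x0 with hv
  -- extract n+1 distinct support constraints
  obtain ⟨T, hTS, hTcard⟩ := Set.exists_subset_card_eq (show n + 1 ≤ S.ncard from hcard)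
  have hTfin : T.Finite := Set.toFinite T
  have hcardT : hTfin.toFinset.card = n + 1 := by
    rw [← hTcard, Set.ncard_eq_toFinset_card T hTfin]
  let e : hTfin.toFinset ≃ Fin (n + 1) := hTfin.toFinset.equivFinOfCardEq hcardT
  let g : Fin (n + 1) → Fin m := fun t => (e.symm t : Fin m)
  have hginj : Function.Injective g := by
    intro a b hab
    have := Subtype.coe_injective hab
    exact e.symm.injective this
  have hgS : ∀ t, g t ∈ S := fun t => hTS (by simpa using (e.symm t).2)
  -- witnesses
  choose w hw1 hw2 using fun t => hgS t
  have hx0' : ∀ i, x0 ∈ X i := fun i => Set.mem_iInter.mp hx0 i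
  have hwv : ∀ t, L (w t) < v := fun t => hw2 t
  -- positive gap
  have hne : (Finset.univ : Finset (Fin (n + 1))).Nonempty := ⟨0, Finset.mem_univ 0⟩
  set ε : ℝ := Finset.univ.inf' hne (fun t => v - L (w t)) with hε
  have hεpos : 0 < ε := by
    rw [hε]
    apply Finset.lt_inf'_iff hne |>.mpr
    intro t _
    exact sub_pos.mpr (hwv t)
  have hεle : ∀ t, ε ≤ v - L (w t) := fun t =>
    Finset.inf'_le _ (Finset.mem_univ t)
  -- the points y t on segments [x0, w t] at objective level v - ε
  set θ : Fin (n + 1) → ℝ := fun t => ε / (v - L (w t)) with hθ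
  have hθpos : ∀ t, 0 < θ t := fun t => div_pos hεpos (sub_pos.mpr (hwv t))
  have hθle : ∀ t, θ t ≤ 1 := fun t =>
    (div_le_one (sub_pos.mpr (hwv t))).mpr (hεle t)
  set y : Fin (n + 1) → (Fin n → ℝ) := fun t => (1 - θ t) • x0 + θ t • w t with hy
  have hyX : ∀ t i, i ≠ g t → y t ∈ X i := by
    intro t i hi
    exact hconv i (hx0' i) (hw1 t i hi) (by linarith [hθle t]) (le_of_lt (hθpos t)) (by ring)
  have hyL : ∀ t, L (y t) = v - ε := by
    intro t
    have hden : v - L (w t) ≠ 0 := ne_of_gt (sub_pos.mpr (hwv t))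
    rw [hy]
    simp only [map_add, map_smul, smul_eq_mul]
    rw [hθ]
    field_simp
    ring
  -- the y's are affinely dependent
  have hdep : ¬ AffineIndependent ℝ y := by
    intro hind
    rw [affineIndependent_iff_linearIndependent_vsub ℝ y 0] at hind
    have hker : ∀ t : { x : Fin (n + 1) // x ≠ 0 }, y t - y 0 ∈ LinearMap.ker L := by
      intro t
      rw [LinearMap.mem_ker, map_sub, hyL, hyL, sub_self]
    set f : { x : Fin (n + 1) // x ≠ 0 } → LinearMap.ker L :=
      fun t => ⟨y t - y 0, hker t⟩ with hf
    have hfind : LinearIndependent ℝ f := by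
      apply LinearIndependent.of_comp (LinearMap.ker L).subtype
      exact hind
    have hcardle : Fintype.card { x : Fin (n + 1) // x ≠ 0 } ≤
        Module.finrank ℝ (LinearMap.ker L) := hfind.fintype_card_le_finrank
    have hcardeq : Fintype.card { x : Fin (n + 1) // x ≠ 0 } = n := by
      simp [Fintype.card_subtype_compl]
    have hkerne : LinearMap.ker L ≠ ⊤ := by
      intro htop
      have h0 : L (x0 - w 0) = 0 := by
        have : x0 - w 0 ∈ LinearMap.ker L := htop ▸ Submodule.mem_top
        exact this
      rw [map_sub] at h0
      have h1 := hwv 0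
      rw [hv] at h1
      linarith
    have hlt : Module.finrank ℝ (LinearMap.ker L) < Module.finrank ℝ (Fin n → ℝ) :=
      Submodule.finrank_lt hkerne
    rw [Module.finrank_pi] at hlt
    simp at hlt
    omega
  -- Radon partition
  obtain ⟨I, p, hpI, hpIc⟩ := Convex.radon_partition hdep
  -- p is feasible
  have hpX : ∀ i, p ∈ X i := by
    intro i
    by_cases hex : ∃ t, g t = i
    · obtain ⟨t0, ht0⟩ := hex
      by_cases htI : t0 ∈ I
      · -- use Iᶜ: all t ∈ Iᶜ have t ≠ t0 so g t ≠ i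
        refine convexHull_min ?_ (hconv i) hpIc
        rintro _ ⟨t, htIc, rfl⟩
        apply hyX t i
        intro h
        exact htIc (by rw [← ht0] at h; rw [hginj h.symm]; exact htI)
      · refine convexHull_min ?_ (hconv i) hpI
        rintro _ ⟨t, htI', rfl⟩
        apply hyX t i
        intro h
        apply htI
        rw [← ht0] at h
        rw [← hginj h.symm]
        exact htI'
    · push_neg at hex
      refine convexHull_min ?_ (hconv i) hpI
      rintro _ ⟨t, _, rfl⟩
      exact hyX t i (fun h => hex t h.symm)
  -- but the objective at p is v - ε < v
  have hpL : L p = v - ε := by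
    have hsub : (y '' I) ⊆ {x | L x = v - ε} := by
      rintro _ ⟨t, _, rfl⟩
      exact hyL t
    have : p ∈ {x | L x = v - ε} :=
      convexHull_min hsub (convex_hyperplane L.isLinear (v - ε)) hpI
    exact this
  have := hopt p (Set.mem_iInter.mpr hpX)
  rw [← hLdef p, ← hLdef x0, ← hv, hpL] at this
  linarith
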